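/- arXiv:2407.17051 — 3 statements merged into one kernel-verified Lean document; each statement's English description precedes it below -/
import Mathlib

section
/- Let D be a converse invariant oriented graph and let u, v be two non-adjacent vertices of D that are swapped by some automorphism of D. Then D + (u,v) is also converse invariant. -/
open Finset Polynomial

/-- An oriented graph: loopless, at most one arc between any pair of vertices. -/
def IsOrgraph {V : Type*} (A : V → V → Prop) : Prop :=
  ∀ u v, A u v → u ≠ v ∧ ¬ A v u

/-- A tournament: loopless, exactly one arc between any two distinct vertices. -/
def IsTournament {W : Type*} (B : W → W → Prop) : Prop :=
  (∀ v, ¬ B v v) ∧ ∀ u v, u ≠ v → (B u v ↔ ¬ B v u)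

/-- The number of subdigraphs of `B` isomorphic to `A`: a subdigraph is a pair of a
vertex set and an arc relation contained in `B` with all endpoints in the vertex set. -/
noncomputable def copyCount {V W : Type*} (A : V → V → Prop) (B : W → W → Prop) : ℕ :=
  Nat.card {p : Set W × (W → W → Prop) //
    (∀ a b, p.2 a b → B a b ∧ a ∈ p.1 ∧ b ∈ p.1) ∧
    ∃ e : V ≃ p.1, ∀ a b, A a b ↔ p.2 (e a : W) (e b : W)}

/-- `A` is converse invariant: every finite tournament contains as many copies of `A`
as of its converse. -/
def ConverseInvariant {V : Type*} (A : V → V → Prop) : Prop :=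
  ∀ (W : Type) (_ : Fintype W) (B : W → W → Prop), IsTournament B →
    copyCount A B = copyCount (fun a b => A b a) B

/-- Out-degree. -/
noncomputable def outDeg {V : Type*} (A : V → V → Prop) (u : V) : ℕ :=
  Nat.card {v // A u v}

/-- In-degree. -/
noncomputable def inDeg {V : Type*} (A : V → V → Prop) (u : V) : ℕ :=
  Nat.card {v // A v u}

/-- The polynomial `P_D(x) = ∑_u (1+x)^{d⁺(u)} (1-x)^{d⁻(u)}`. -/
noncomputable def degPoly {V : Type*} [Fintype V] (A : V → V → Prop) : Polynomial ℤ :=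
  ∑ u : V, (1 + X) ^ outDeg A u * (1 - X) ^ inDeg A u

/-- `A` is an orientation of the simple graph `G`. -/
def IsOrientation {V : Type*} (G : SimpleGraph V) (A : V → V → Prop) : Prop :=
  (∀ u v, A u v → ¬ A v u) ∧ ∀ u v, G.Adj u v ↔ (A u v ∨ A v u)

section ConvAux

variable {V W : Type*}

def EmbT (A : V → V → Prop) (B : W → W → Prop) : Type _ :=
  {e : V ↪ W // ∀ a b, A a b → B (e a) (e b)}

def AutT (A : V → V → Prop) : Type _ :=
  {ψ : V ≃ V // ∀ a b, A a b ↔ A (ψ a) (ψ b)}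

def CopyT (A : V → V → Prop) (B : W → W → Prop) : Type _ :=
  {p : Set W × (W → W → Prop) //
    (∀ a b, p.2 a b → B a b ∧ a ∈ p.1 ∧ b ∈ p.1) ∧
    ∃ e : V ≃ p.1, ∀ a b, A a b ↔ p.2 (e a : W) (e b : W)}

instance (A : V → V → Prop) (B : W → W → Prop) [Finite V] [Finite W] : Finite (EmbT A B) := by
  unfold EmbT; infer_instance

instance (A : V → V → Prop) [Finite V] : Finite (AutT A) := by
  unfold AutT; infer_instance

instance (A : V → V → Prop) (B : W → W → Prop) [Finite W] : Finite (CopyT A B) := by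
  unfold CopyT; infer_instance

def push (A : V → V → Prop) (e : V ↪ W) : W → W → Prop :=
  fun x y => ∃ a b, A a b ∧ e a = x ∧ e b = y

lemma push_apply (A : V → V → Prop) (e : V ↪ W) (a b : V) :
    push A e (e a) (e b) ↔ A a b := by
  constructor
  · rintro ⟨a', b', h, ha, hb⟩
    rwa [e.injective ha, e.injective hb] at h
  · intro h; exact ⟨a, b, h, rfl, rfl⟩

def cmap (A : V → V → Prop) (B : W → W → Prop) (e : EmbT A B) : CopyT A B :=
  ⟨(Set.range e.1, push A e.1), by
    constructor
    · rintro x y ⟨a, b, h, rfl, rfl⟩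
      exact ⟨e.2 a b h, ⟨a, rfl⟩, ⟨b, rfl⟩⟩
    · exact ⟨Equiv.ofInjective e.1 e.1.injective,
        fun a b => (push_apply A e.1 a b).symm⟩⟩

def IsoT (A : V → V → Prop) (B : W → W → Prop) (c : CopyT A B) : Type _ :=
  {f : V ≃ c.1.1 // ∀ a b, A a b ↔ c.1.2 (f a : W) (f b : W)}


section ConvAux2
variable {V W : Type*}

noncomputable def isoEquivAut (A : V → V → Prop) (B : W → W → Prop) (c : CopyT A B) :
    IsoT A B c ≃ AutT A := by
  classical
  obtain h := c.2.2
  let e₀ : V ≃ c.1.1 := h.choose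
  have he₀ : ∀ a b, A a b ↔ c.1.2 (e₀ a : W) (e₀ b : W) := h.choose_spec
  refine
    { toFun := fun f => ⟨f.1.trans e₀.symm, fun a b => ?_⟩
      invFun := fun ψ => ⟨ψ.1.trans e₀, fun a b => ?_⟩
      left_inv := fun f => ?_
      right_inv := fun ψ => ?_ }
  · simp only [Equiv.trans_apply]
    rw [he₀ (e₀.symm (f.1 a)) (e₀.symm (f.1 b)), Equiv.apply_symm_apply,
      Equiv.apply_symm_apply]
    exact f.2 a b
  · rw [ψ.2 a b]
    exact he₀ (ψ.1 a) (ψ.1 b)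
  · apply Subtype.ext; ext a; simp
  · apply Subtype.ext; ext a; simp

noncomputable def fiberEquivIso (A : V → V → Prop) (B : W → W → Prop) (c : CopyT A B) :
    {e : EmbT A B // cmap A B e = c} ≃ IsoT A B c := by
  classical
  refine
    { toFun := fun ep =>
        ⟨(Equiv.ofInjective ep.1.1 ep.1.1.injective).trans
            (Equiv.setCongr (congrArg (fun d => d.1.1) ep.2)), fun a b => ?_⟩
      invFun := fun f =>
        ⟨⟨⟨fun a => (f.1 a : W), fun a b h => f.1.injective (Subtype.ext h)⟩,
          fun a b hab => (c.2.1 _ _ ((f.2 a b).mp hab)).1⟩, ?_⟩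
      left_inv := fun ep => ?_
      right_inv := fun f => ?_ }
  · have h2 : push A ep.1.1 = c.1.2 := congrArg (fun d => d.1.2) ep.2
    have : A a b ↔ push A ep.1.1 (ep.1.1 a) (ep.1.1 b) := (push_apply _ _ a b).symm
    rw [h2] at this
    exact this
  · apply Subtype.ext
    apply Prod.ext
    · show Set.range (fun a => (f.1 a : W)) = c.1.1
      ext x
      constructor
      · rintro ⟨a, rfl⟩; exact (f.1 a).2
      · intro hx
        exact ⟨f.1.symm ⟨x, hx⟩, by simp⟩
    · show push A _ = c.1.2
      funext x y
      apply propext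
      constructor
      · rintro ⟨a, b, hab, rfl, rfl⟩
        exact (f.2 a b).mp hab
      · intro hxy
        obtain ⟨_, hx, hy⟩ := c.2.1 x y hxy
        refine ⟨f.1.symm ⟨x, hx⟩, f.1.symm ⟨y, hy⟩, ?_, by show ((f.1 (f.1.symm ⟨x, hx⟩) : W)) = x; simp,
          by show ((f.1 (f.1.symm ⟨y, hy⟩) : W)) = y; simp⟩
        rw [f.2]
        simpa using hxy
  · apply Subtype.ext; apply Subtype.ext; rfl
  · apply Subtype.ext; apply Equiv.ext; intro a; apply Subtype.ext; rfl

lemma card_emb (A : V → V → Prop) (B : W → W → Prop) [Finite V] [Finite W] :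
    Nat.card (EmbT A B) = Nat.card (CopyT A B) * Nat.card (AutT A) := by
  have e1 : EmbT A B ≃ CopyT A B × AutT A :=
    (Equiv.sigmaFiberEquiv (cmap A B)).symm.trans
      ((Equiv.sigmaCongrRight fun c => (fiberEquivIso A B c).trans (isoEquivAut A B c)).trans
        (Equiv.sigmaEquivProd _ _))
  rw [Nat.card_congr e1, Nat.card_prod]

end ConvAux2

section ConvAux3
variable {V W : Type*}

lemma card_emb_split [Finite V] [Finite W] (A : V → V → Prop) (B : W → W → Prop)
    (hB : IsTournament B) (u v : V) (huv : u ≠ v) :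
    Nat.card (EmbT (fun a b => A a b ∨ (a = u ∧ b = v)) B)
      + Nat.card (EmbT (fun a b => A a b ∨ (a = v ∧ b = u)) B)
      = Nat.card (EmbT A B) := by
  classical
  have e1 : EmbT (fun a b => A a b ∨ (a = u ∧ b = v)) B ⊕
      EmbT (fun a b => A a b ∨ (a = v ∧ b = u)) B ≃ EmbT A B := by
    refine
      { toFun := fun s => Sum.elim
          (fun e => ⟨e.1, fun a b h => e.2 a b (Or.inl h)⟩)
          (fun e => ⟨e.1, fun a b h => e.2 a b (Or.inl h)⟩) s
        invFun := fun e =>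
          if hc : B (e.1 u) (e.1 v) then
            Sum.inl ⟨e.1, fun a b h => by
              rcases h with h | ⟨rfl, rfl⟩
              · exact e.2 a b h
              · exact hc⟩
          else
            Sum.inr ⟨e.1, fun a b h => by
              rcases h with h | ⟨rfl, rfl⟩
              · exact e.2 a b h
              · exact ((hB.2 (e.1 a) (e.1 b)
                  (fun hh => huv (e.1.injective hh.symm))).mpr hc)⟩
        left_inv := fun s => ?_
        right_inv := fun e => ?_ }
    · rcases s with e | e
      · simp only [Sum.elim_inl]
        split_ifs with hc
        · rfl
        · exact (hc (e.2 u v (Or.inr ⟨rfl, rfl⟩))).elim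
      · simp only [Sum.elim_inr]
        have hvu : B (e.1 v) (e.1 u) := e.2 v u (Or.inr ⟨rfl, rfl⟩)
        have : ¬ B (e.1 u) (e.1 v) := by
          intro h
          exact ((hB.2 (e.1 u) (e.1 v) (fun hh => huv (e.1.injective hh))).mp h) hvu
        split_ifs with hc
        · exact (this hc).elim
        · rfl
    · dsimp only
      split_ifs <;> rfl
  rw [← Nat.card_congr e1, Nat.card_sum]

lemma card_emb_phi (A : V → V → Prop) (B : W → W → Prop)
    (u v : V) (φ : V ≃ V) (hφ : ∀ a b, A a b ↔ A (φ a) (φ b))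
    (hu : φ u = v) (hv : φ v = u) :
    Nat.card (EmbT (fun a b => A a b ∨ (a = u ∧ b = v)) B)
      = Nat.card (EmbT (fun a b => A a b ∨ (a = v ∧ b = u)) B) := by
  have hu' : φ.symm v = u := by rw [← hu, Equiv.symm_apply_apply]
  have hv' : φ.symm u = v := by rw [← hv, Equiv.symm_apply_apply]
  refine Nat.card_congr
    { toFun := fun e => ⟨(φ.symm.toEmbedding).trans e.1, fun a b h => by
        rcases h with h | ⟨ha, hb⟩
        · exact e.2 _ _ (Or.inl (by
            have := (hφ (φ.symm a) (φ.symm b)).mpr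
            simp only [Equiv.apply_symm_apply] at this
            exact this h))
        · simp only [ha, hb, Function.Embedding.trans_apply, Equiv.coe_toEmbedding, hu', hv']
          exact e.2 u v (Or.inr ⟨rfl, rfl⟩)⟩
      invFun := fun e => ⟨(φ.toEmbedding).trans e.1, fun a b h => by
        rcases h with h | ⟨ha, hb⟩
        · exact e.2 _ _ (Or.inl ((hφ a b).mp h))
        · simp only [ha, hb, Function.Embedding.trans_apply, Equiv.coe_toEmbedding, hu, hv]
          exact e.2 v u (Or.inr ⟨rfl, rfl⟩)⟩
      left_inv := fun e => by
        apply Subtype.ext; ext a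
        simp
      right_inv := fun e => by
        apply Subtype.ext; ext a
        simp }

noncomputable def autConvEquiv (A : V → V → Prop) :
    AutT (fun a b => A b a) ≃ AutT A :=
  { toFun := fun ψ => ⟨ψ.1, fun a b => ψ.2 b a⟩
    invFun := fun ψ => ⟨ψ.1, fun a b => ψ.2 b a⟩
    left_inv := fun ψ => rfl
    right_inv := fun ψ => rfl }

end ConvAux3

/-- Adding an arc between two non-adjacent vertex-transitive vertices of a
converse invariant orgraph yields a converse invariant orgraph. -/
theorem stmt_12 {V : Type} [Fintype V] [DecidableEq V]
    (A : V → V → Prop) (hA : IsOrgraph A) (hCI : ConverseInvariant A)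
    (u v : V) (huv : u ≠ v) (hna : ¬ A u v ∧ ¬ A v u)
    (φ : V ≃ V) (hφ : ∀ a b, A a b ↔ A (φ a) (φ b))
    (hu : φ u = v) (hv : φ v = u) :
    ConverseInvariant (fun a b => A a b ∨ (a = u ∧ b = v)) := by
  intro W instW B hB
  have hFW : Finite W := inferInstance
  have hFV : Finite V := inferInstance
  set A₁ : V → V → Prop := fun a b => A a b ∨ (a = u ∧ b = v) with hA₁def
  set A₂ : V → V → Prop := fun a b => A b a ∨ (a = v ∧ b = u) with hA₂def
  have hA₂conv : (fun a b => A₁ b a) = A₂ := by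
    funext a b
    apply propext
    rw [hA₁def, hA₂def]
    tauto
  -- step 1 : doubling on the A side
  have h1 : Nat.card (EmbT A₁ B) + Nat.card (EmbT A₁ B) = Nat.card (EmbT A B) := by
    nth_rewrite 2 [card_emb_phi A B u v φ hφ hu hv]
    exact card_emb_split A B hB u v huv
  -- step 2 : doubling on the converse side
  have h2 : Nat.card (EmbT A₂ B) + Nat.card (EmbT A₂ B)
      = Nat.card (EmbT (fun a b => A b a) B) := by
    nth_rewrite 2 [card_emb_phi (fun a b => A b a) B v u φ (fun a b => hφ b a) hv hu]
    exact card_emb_split (fun a b => A b a) B hB v u huv.symm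
  -- converse invariance of A transfers to embeddings
  have hE : Nat.card (EmbT A B) = Nat.card (EmbT (fun a b => A b a) B) := by
    rw [card_emb A B, card_emb (fun a b => A b a) B,
      Nat.card_congr (autConvEquiv A)]
    congr 1
    exact hCI W instW B hB
  -- combine
  have h3 : Nat.card (EmbT A₁ B) = Nat.card (EmbT A₂ B) := by omega
  have hGA : Nat.card (AutT A₂) = Nat.card (AutT A₁) := by
    rw [← hA₂conv]
    exact Nat.card_congr (autConvEquiv A₁)
  have hGpos : 0 < Nat.card (AutT A₁) := by
    have : Nonempty (AutT A₁) := ⟨⟨Equiv.refl V, fun a b => Iff.rfl⟩⟩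
    exact Nat.card_pos
  have h4 : Nat.card (CopyT A₁ B) * Nat.card (AutT A₁)
      = Nat.card (CopyT A₂ B) * Nat.card (AutT A₁) := by
    rw [← card_emb A₁ B, h3, card_emb A₂ B, hGA]
  have h5 : Nat.card (CopyT A₁ B) = Nat.card (CopyT A₂ B) :=
    Nat.eq_of_mul_eq_mul_right hGpos h4
  show copyCount A₁ B = copyCount (fun a b => A₁ b a) B
  rw [hA₂conv]
  exact h5
end ConvAux
end

section
/- For every integer k ≥ 3 there exists an oriented graph D with maximum total degree Δ(D) = k such that D is not isomorphic to −D and D is converse invariant (f_T(D) = f_T(−D) for every tournament T). -/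
open Finset Polynomial

namespace S15

/-! ### the oriented graph: an out-cherry at `0` (leaves `1,2`), an out-star at `3`
(leaves `4,…,k+3`), and an in-star at `k+4` (sources `k+5,…,2k+4`).  -/

def arc (k a b : ℕ) : Prop :=
  (a = 0 ∧ (b = 1 ∨ b = 2)) ∨ (a = 3 ∧ 4 ≤ b ∧ b ≤ k+3) ∨ (k+5 ≤ a ∧ a ≤ 2*k+4 ∧ b = k+4)

instance (k a b : ℕ) : Decidable (arc k a b) :=
  decidable_of_iff ((a = 0 ∧ (b = 1 ∨ b = 2)) ∨ (a = 3 ∧ 4 ≤ b ∧ b ≤ k+3) ∨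
    (k+5 ≤ a ∧ a ≤ 2*k+4 ∧ b = k+4)) Iff.rfl

def Ar (k : ℕ) (a b : Fin (2*k+5)) : Prop := arc k a.val b.val

/-! ### arithmetic auxiliaries -/

def sfun (k w l v : ℕ) : ℕ :=
  if v = 0 then l else if v = 1 then 0 else if v = 2 then w else if v = 3 then k+4
  else if v ≤ k+3 then v+k+1 else if v = k+4 then 3 else v-(k+1)

def sinv (k w l v : ℕ) : ℕ :=
  if v = 0 then 1 else if v = l then 0 else if v = w then 2 else if v = 3 then k+4
  else if v ≤ k+3 then v+k+1 else if v = k+4 then 3 else v-(k+1)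

def q1 (k w l u v : ℕ) : Prop := (arc k u v ∧ u ≠ 0) ∨ ((u = 0 ∨ u = w) ∧ v = l)

def WL (w l : ℕ) : Prop := (w = 1 ∧ l = 2) ∨ (w = 2 ∧ l = 1)

def srel (k w l v u : ℕ) : Prop :=
  (v = 0 ∧ u = l) ∨ (v = 1 ∧ u = 0) ∨ (v = 2 ∧ u = w) ∨ (v = 3 ∧ u = k+4) ∨
  (4 ≤ v ∧ v ≤ k+3 ∧ u = v+k+1) ∨ (v = k+4 ∧ u = 3) ∨ (k+5 ≤ v ∧ v ≤ 2*k+4 ∧ u + (k+1) = v)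

variable {k w l : ℕ}

lemma sfun_srel (hk : 3 ≤ k) (hwl : WL w l) {v : ℕ} (hv : v < 2*k+5) :
    srel k w l v (sfun k w l v) := by
  unfold WL at hwl; unfold srel sfun; split_ifs <;> omega

lemma sinv_srel (hk : 3 ≤ k) (hwl : WL w l) {v u : ℕ} (hv : v < 2*k+5) (h : srel k w l v u) :
    sinv k w l u = v := by
  unfold WL at hwl; unfold srel at h; unfold sinv; split_ifs <;> omega

lemma sfun_lt (hk : 3 ≤ k) (hwl : WL w l) {v : ℕ} (hv : v < 2*k+5) :
    sfun k w l v < 2*k+5 := by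
  have := sfun_srel (w := w) (l := l) hk hwl hv
  unfold WL at hwl; unfold srel at this; omega

lemma sinv_sfun (hk : 3 ≤ k) (hwl : WL w l) {v : ℕ} (hv : v < 2*k+5) :
    sinv k w l (sfun k w l v) = v :=
  sinv_srel hk hwl hv (sfun_srel hk hwl hv)

lemma srel_sinv (hk : 3 ≤ k) (hwl : WL w l) {v : ℕ} (hv : v < 2*k+5) :
    srel k w l (sinv k w l v) v := by
  unfold WL at hwl; unfold srel sinv; split_ifs <;> omega

lemma sinv_lt (hk : 3 ≤ k) (hwl : WL w l) {v : ℕ} (hv : v < 2*k+5) :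
    sinv k w l v < 2*k+5 := by
  have := srel_sinv (w := w) (l := l) hk hwl hv
  unfold WL at hwl; unfold srel at this; omega

lemma sfun_sinv (hk : 3 ≤ k) (hwl : WL w l) {v : ℕ} (hv : v < 2*k+5) :
    sfun k w l (sinv k w l v) = v := by
  have h1 := srel_sinv hk hwl hv
  have h2 := sfun_srel (w := w) (l := l) hk hwl (sinv_lt hk hwl hv)
  unfold WL at hwl; unfold srel at h1 h2; omega

set_option maxHeartbeats 2000000 in
lemma arith1 (hk : 3 ≤ k) (hwl : WL w l) {a b : ℕ} (ha : a < 2*k+5) (hb : b < 2*k+5) :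
    arc k b a ↔ q1 k w l (sfun k w l a) (sfun k w l b) := by
  have h1 := sfun_srel (w := w) (l := l) hk hwl ha
  have h2 := sfun_srel (w := w) (l := l) hk hwl hb
  unfold WL at hwl; unfold srel at h1 h2; unfold q1 arc; omega

lemma arith2 (hk : 3 ≤ k) (hwl : WL w l) {a b : ℕ} (ha : a < 2*k+5) (hb : b < 2*k+5) :
    ((q1 k w l a b ∧ b ≠ l) ∨ ((b = l ∨ b = w) ∧ a = 0)) ↔ arc k a b := by
  unfold WL at hwl; unfold q1 arc; constructor <;> intro h <;> omega

/-! ### basic graph properties -/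

lemma orgraph (k : ℕ) : IsOrgraph (Ar k) := by
  intro u v h
  unfold Ar arc at h
  constructor
  · intro he; rw [Fin.ext_iff] at he; omega
  · intro h2; unfold Ar arc at h2; omega

lemma two_in (k : ℕ) (x y z : Fin (2*k+5)) (hxy : x ≠ y)
    (hx : Ar k x z) (hy : Ar k y z) : z.val = k + 4 := by
  have : x.val ≠ y.val := fun h => hxy (Fin.ext h)
  unfold Ar arc at hx hy
  omega

lemma not_self_converse (k : ℕ) (hk : 3 ≤ k) :
    ¬ ∃ e : Fin (2*k+5) ≃ Fin (2*k+5), ∀ a b, Ar k a b ↔ Ar k (e b) (e a) := by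
  rintro ⟨e, he⟩
  set i0 : Fin (2*k+5) := ⟨0, by omega⟩
  set i1 : Fin (2*k+5) := ⟨1, by omega⟩
  set i2 : Fin (2*k+5) := ⟨2, by omega⟩
  set i3 : Fin (2*k+5) := ⟨3, by omega⟩
  set i4 : Fin (2*k+5) := ⟨4, by omega⟩
  set i5 : Fin (2*k+5) := ⟨5, by omega⟩
  have h01 : Ar k i0 i1 := by unfold Ar arc; simp [i0, i1]
  have h02 : Ar k i0 i2 := by unfold Ar arc; simp [i0, i2]
  have h34 : Ar k i3 i4 := by unfold Ar arc; simp [i3, i4]; omega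
  have h35 : Ar k i3 i5 := by unfold Ar arc; simp [i3, i5]; omega
  have e12 : e i1 ≠ e i2 := by
    intro h; have := e.injective h; simp [i1, i2, Fin.ext_iff] at this
  have e45 : e i4 ≠ e i5 := by
    intro h; have := e.injective h; simp [i4, i5, Fin.ext_iff] at this
  have hA : (e i0).val = k + 4 :=
    two_in k (e i1) (e i2) (e i0) e12 ((he i0 i1).mp h01) ((he i0 i2).mp h02)
  have hB : (e i3).val = k + 4 :=
    two_in k (e i4) (e i5) (e i3) e45 ((he i3 i4).mp h34) ((he i3 i5).mp h35)
  have : e i0 = e i3 := Fin.ext (hA.trans hB.symm)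
  have := e.injective this
  simp [i0, i3, Fin.ext_iff] at this

/-! ### degrees -/

lemma key {n : ℕ} (q : ℕ → Prop) [DecidablePred q] :
    Nat.card {v : Fin n // q v.val} = ((Finset.range n).filter q).card := by
  rw [Nat.card_eq_fintype_card, Fintype.card_subtype]
  exact Finset.card_bij (fun v _ => v.val)
    (fun v hv => by
      simp only [Finset.mem_filter, Finset.mem_range]
      exact ⟨v.isLt, (Finset.mem_filter.mp hv).2⟩)
    (fun a _ b _ h => Fin.ext h)
    (fun b hb => by
      simp only [Finset.mem_filter, Finset.mem_range] at hb
      exact ⟨⟨b, hb.1⟩, by simp [hb.2], rfl⟩)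

lemma out_deg (hk : 3 ≤ k) (u : Fin (2*k+5)) :
    outDeg (Ar k) u =
      if u.val = 0 then 2 else if u.val = 3 then k else if k+5 ≤ u.val then 1 else 0 := by
  have hu := u.isLt
  unfold outDeg Ar
  rw [key (fun b => arc k u.val b)]
  by_cases h0 : u.val = 0
  · rw [if_pos h0, show (Finset.range (2*k+5)).filter (fun b => arc k u.val b) = {1, 2} from by
      ext x
      rw [Finset.mem_filter]
      simp only [Finset.mem_filter, Finset.mem_range, Finset.mem_insert, Finset.mem_singleton, arc]
      omega]
    rfl
  · rw [if_neg h0]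
    by_cases h3 : u.val = 3
    · rw [if_pos h3, show (Finset.range (2*k+5)).filter (fun b => arc k u.val b) =
          Finset.Ico 4 (k+4) from by
        ext x
        rw [Finset.mem_filter]
        simp only [Finset.mem_filter, Finset.mem_range, Finset.mem_Ico, arc]
        omega]
      rw [Nat.card_Ico]; omega
    · rw [if_neg h3]
      by_cases hs : k+5 ≤ u.val
      · rw [if_pos hs, show (Finset.range (2*k+5)).filter (fun b => arc k u.val b) = {k+4} from by
          ext x
          rw [Finset.mem_filter]
          simp only [Finset.mem_filter, Finset.mem_range, Finset.mem_singleton, arc]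
          omega]
        rfl
      · rw [if_neg hs, show (Finset.range (2*k+5)).filter (fun b => arc k u.val b) = ∅ from by
          ext x
          rw [Finset.mem_filter]
          simp only [Finset.mem_filter, Finset.mem_range, Finset.notMem_empty, iff_false,
            not_and, arc]
          omega]
        rfl

lemma in_deg (hk : 3 ≤ k) (u : Fin (2*k+5)) :
    inDeg (Ar k) u =
      if u.val = 1 ∨ u.val = 2 then 1 else if u.val = k+4 then k
      else if 4 ≤ u.val ∧ u.val ≤ k+3 then 1 else 0 := by
  classical
  have hu := u.isLt
  unfold inDeg Ar
  rw [key (fun a => arc k a u.val)]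
  by_cases h12 : u.val = 1 ∨ u.val = 2
  · rw [if_pos h12, show (Finset.range (2*k+5)).filter (fun a => arc k a u.val) = {0} from by
      ext x
      rw [Finset.mem_filter]
      simp only [Finset.mem_filter, Finset.mem_range, Finset.mem_singleton, arc]
      omega]
    rfl
  · rw [if_neg h12]
    by_cases hc : u.val = k+4
    · rw [if_pos hc, show (Finset.range (2*k+5)).filter (fun a => arc k a u.val) =
          Finset.Ico (k+5) (2*k+5) from by
        ext x
        rw [Finset.mem_filter]
        simp only [Finset.mem_filter, Finset.mem_range, Finset.mem_Ico, arc]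
        omega]
      rw [Nat.card_Ico]; omega
    · rw [if_neg hc]
      by_cases hm : 4 ≤ u.val ∧ u.val ≤ k+3
      · rw [if_pos hm, show (Finset.range (2*k+5)).filter (fun a => arc k a u.val) = {3} from by
          ext x
          rw [Finset.mem_filter]
          simp only [Finset.mem_filter, Finset.mem_range, Finset.mem_singleton, arc]
          omega]
        rfl
      · rw [if_neg hm, show (Finset.range (2*k+5)).filter (fun a => arc k a u.val) = ∅ from by
          ext x
          rw [Finset.mem_filter]
          simp only [Finset.mem_filter, Finset.mem_range, Finset.notMem_empty, iff_false,
            not_and, arc]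
          omega]
        rfl

lemma sup_deg (hk : 3 ≤ k) :
    (Finset.univ.sup fun v : Fin (2*k+5) => outDeg (Ar k) v + inDeg (Ar k) v) = k := by
  classical
  apply le_antisymm
  · apply Finset.sup_le
    intro v _
    rw [out_deg hk, in_deg hk]
    split_ifs <;> omega
  · have h3 : (3:ℕ) < 2*k+5 := by omega
    refine le_trans ?_ (Finset.le_sup (f := fun v : Fin (2*k+5) => outDeg (Ar k) v + inDeg (Ar k) v)
      (Finset.mem_univ (⟨3, h3⟩ : Fin (2*k+5))))
    show k ≤ outDeg (Ar k) ⟨3, h3⟩ + inDeg (Ar k) ⟨3, h3⟩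
    rw [out_deg hk, in_deg hk]
    have hval : ((⟨3, h3⟩ : Fin (2*k+5)) : ℕ) = 3 := rfl
    split_ifs <;> first | omega | exact (‹False›).elim

/-! ### the `conv` operation -/

variable {W : Type*}

def flp (r : W → W → Prop) : W → W → Prop := fun a b => r b a

@[simp] lemma flp_flp (r : W → W → Prop) : flp (flp r) = r := rfl

lemma flp_tournament {B : W → W → Prop} (hB : IsTournament B) : IsTournament (flp B) := by
  refine ⟨fun v hv => hB.1 v hv, fun u v huv => ?_⟩
  have := hB.2 v u (Ne.symm huv)
  unfold flp
  constructor
  · intro h hv; exact (this.mp h) hv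
  · intro h; exact this.mpr h

def IsC (R : W → W → Prop) (c : W) : Prop :=
  ∃ x y, x ≠ y ∧ R c x ∧ R c y ∧ ∀ z, R c z → z = x ∨ z = y

def conv (B R : W → W → Prop) (a b : W) : Prop :=
  (R a b ∧ ¬ IsC R a) ∨
  (∃ c, IsC R c ∧ R c b ∧ (∀ y, R c y → y = b ∨ B y b) ∧ (a = c ∨ (R c a ∧ a ≠ b)))

def conv' (B R : W → W → Prop) (a b : W) : Prop := conv (flp B) (flp R) b a

def patt {n : ℕ} (ε : Fin n → W) (Q : Fin n → Fin n → Prop) : W → W → Prop :=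
  fun w z => ∃ x y, Q x y ∧ w = ε x ∧ z = ε y

lemma patt_apply {n : ℕ} {ε : Fin n → W} (hε : Function.Injective ε)
    {Q : Fin n → Fin n → Prop} (x y : Fin n) : patt ε Q (ε x) (ε y) ↔ Q x y := by
  constructor
  · rintro ⟨x', y', hq, hx, hy⟩
    rwa [hε hx, hε hy]
  · intro h; exact ⟨x, y, h, rfl, rfl⟩

lemma patt_congr {n : ℕ} (ε : Fin n → W) {Q Q' : Fin n → Fin n → Prop}
    (h : ∀ x y, Q x y ↔ Q' x y) : patt ε Q = patt ε Q' := by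
  funext a b
  exact propext ⟨fun ⟨x, y, hq, hx, hy⟩ => ⟨x, y, (h x y).mp hq, hx, hy⟩,
    fun ⟨x, y, hq, hx, hy⟩ => ⟨x, y, (h x y).mpr hq, hx, hy⟩⟩

lemma flp_patt {n : ℕ} (ε : Fin n → W) (Q : Fin n → Fin n → Prop) :
    flp (patt ε Q) = patt ε (flp Q) := by
  funext a b
  exact propext ⟨fun ⟨x, y, hq, hx, hy⟩ => ⟨y, x, hq, hy, hx⟩,
    fun ⟨x, y, hq, hx, hy⟩ => ⟨y, x, hq, hy, hx⟩⟩

section Conv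

variable {n : ℕ} {B : W → W → Prop} {ε : Fin n → W} {Q : Fin n → Fin n → Prop}
  {c₀ w l : Fin n}

lemma isC_patt (hε : Function.Injective ε) (hwl : w ≠ l)
    (hout : ∀ y, Q c₀ y ↔ (y = w ∨ y = l))
    (huniq : ∀ c x y, x ≠ y → Q c x → Q c y → (∀ z, Q c z → z = x ∨ z = y) → c = c₀) :
    ∀ u, IsC (patt ε Q) u ↔ u = ε c₀ := by
  intro u
  constructor
  · rintro ⟨x, y, hxy, ⟨c, x', hq1, rfl, rfl⟩, ⟨c2, y', hq2, hc2, rfl⟩, hall⟩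
    have hcc2 : c2 = c := hε hc2.symm
    rw [hcc2] at hq2
    have hx'y' : x' ≠ y' := fun h => hxy (by rw [h])
    have hcc : c = c₀ := by
      refine huniq c x' y' hx'y' hq1 hq2 fun z hz => ?_
      rcases hall (ε z) ⟨c, z, hz, rfl, rfl⟩ with h | h
      · exact Or.inl (hε h)
      · exact Or.inr (hε h)
    rw [hcc]
  · rintro rfl
    refine ⟨ε w, ε l, fun h => hwl (hε h), ⟨c₀, w, (hout w).mpr (Or.inl rfl), rfl, rfl⟩,
      ⟨c₀, l, (hout l).mpr (Or.inr rfl), rfl, rfl⟩, ?_⟩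
    rintro z ⟨c', y', hq, hc', rfl⟩
    have hcc' : c' = c₀ := hε hc'.symm
    rw [hcc'] at hq
    rcases (hout y').mp hq with rfl | rfl
    · exact Or.inl rfl
    · exact Or.inr rfl

lemma conv_patt (hB : IsTournament B) (hε : Function.Injective ε)
    (hwl : w ≠ l)
    (hout : ∀ y, Q c₀ y ↔ (y = w ∨ y = l))
    (huniq : ∀ c x y, x ≠ y → Q c x → Q c y → (∀ z, Q c z → z = x ∨ z = y) → c = c₀)
    (hwin : B (ε w) (ε l)) :
    conv B (patt ε Q) =
      patt ε (fun x y => (Q x y ∧ x ≠ c₀) ∨ ((x = c₀ ∨ x = w) ∧ y = l)) := by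
  have hC := isC_patt hε hwl hout huniq
  have hεwl : ε w ≠ ε l := fun h => hwl (hε h)
  have hnotlw : ¬ B (ε l) (ε w) := by
    intro h
    exact (hB.2 (ε w) (ε l) hεwl).mp hwin h
  funext a b
  apply propext
  constructor
  · rintro (⟨⟨x, y, hq, rfl, rfl⟩, hnc⟩ | ⟨c, hc, hcb, hcond, hac⟩)
    · refine ⟨x, y, Or.inl ⟨hq, fun h => hnc ?_⟩, rfl, rfl⟩
      rw [h]; exact (hC (ε c₀)).mpr rfl
    · have hcc : c = ε c₀ := (hC c).mp hc
      subst hcc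
      obtain ⟨c', y, hq, hc', rfl⟩ := hcb
      have hcc' : c' = c₀ := hε hc'.symm
      rw [hcc'] at hq
      have hy : y = w ∨ y = l := (hout y).mp hq
      have hyl : y = l := by
        rcases hy with rfl | rfl
        · rcases hcond (ε l) ⟨c₀, l, (hout l).mpr (Or.inr rfl), rfl, rfl⟩ with h | h
          · exact absurd (hε h).symm hwl
          · exact absurd h hnotlw
        · rfl
      subst y
      rcases hac with rfl | ⟨⟨c'', x, hqx, hc'', rfl⟩, hab⟩
      · exact ⟨c₀, l, Or.inr ⟨Or.inl rfl, rfl⟩, rfl, rfl⟩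
      · have hcc'' : c'' = c₀ := hε hc''.symm
        rw [hcc''] at hqx
        rcases (hout x).mp hqx with rfl | rfl
        · exact ⟨x, l, Or.inr ⟨Or.inr rfl, rfl⟩, rfl, rfl⟩
        · exact absurd rfl hab
  · rintro ⟨x, y, hcase, rfl, rfl⟩
    rcases hcase with ⟨hq, hxc⟩ | ⟨hx, hyl⟩
    · refine Or.inl ⟨⟨x, y, hq, rfl, rfl⟩, fun hc => hxc (hε ((hC (ε x)).mp hc))⟩
    · subst y
      refine Or.inr ⟨ε c₀, (hC (ε c₀)).mpr rfl, ⟨c₀, l, (hout l).mpr (Or.inr rfl), rfl, rfl⟩,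
        ?_, ?_⟩
      · rintro z ⟨c', y', hq, hc', rfl⟩
        have hcc' : c' = c₀ := hε hc'.symm
        rw [hcc'] at hq
        rcases (hout y').mp hq with rfl | rfl
        · exact Or.inr hwin
        · exact Or.inl rfl
      · rcases hx with rfl | rfl
        · exact Or.inl rfl
        · exact Or.inr ⟨⟨c₀, x, (hout x).mpr (Or.inl rfl), rfl, rfl⟩, hεwl⟩

end Conv

/-! ### copies -/

def CopyA (k : ℕ) (B : W → W → Prop) (S : Set W) (R : W → W → Prop) : Prop :=
  (∀ a b, R a b → B a b ∧ a ∈ S ∧ b ∈ S) ∧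
  ∃ e : Fin (2*k+5) ≃ S, ∀ a b, Ar k a b ↔ R (e a : W) (e b : W)

def CopyA' (k : ℕ) (B : W → W → Prop) (S : Set W) (R : W → W → Prop) : Prop :=
  (∀ a b, R a b → B a b ∧ a ∈ S ∧ b ∈ S) ∧
  ∃ e : Fin (2*k+5) ≃ S, ∀ a b, Ar k b a ↔ R (e a : W) (e b : W)

lemma full (hk : 3 ≤ k) {B : W → W → Prop} (hB : IsTournament B) {S : Set W}
    {R : W → W → Prop} (h : CopyA k B S R) :
    CopyA' k B S (conv B R) ∧ conv' B (conv B R) = R := by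
  obtain ⟨hsubR, e, he⟩ := h
  have hn0 : (0:ℕ) < 2*k+5 := by omega
  have hn1 : (1:ℕ) < 2*k+5 := by omega
  have hn2 : (2:ℕ) < 2*k+5 := by omega
  set ε : Fin (2*k+5) → W := fun i => (e i : W) with hεdef
  have hε : Function.Injective ε := fun i j hij => e.injective (Subtype.ext hij)
  have hmem : ∀ i, ε i ∈ S := fun i => (e i).2
  -- `R` is the pattern of `Ar k`
  have hR : R = patt ε (Ar k) := by
    funext a b
    apply propext
    constructor
    · intro hab
      obtain ⟨hBab, ha, hb⟩ := hsubR a b hab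
      refine ⟨e.symm ⟨a, ha⟩, e.symm ⟨b, hb⟩, ?_, ?_, ?_⟩
      · apply (he _ _).mpr
        rw [e.apply_symm_apply, e.apply_symm_apply]
        exact hab
      · rw [hεdef]; simp
      · rw [hεdef]; simp
    · rintro ⟨x, y, hq, rfl, rfl⟩
      exact (he x y).mp hq
  have hsubQ : ∀ x y, Ar k x y → B (ε x) (ε y) := fun x y hxy => (hsubR _ _ ((he x y).mp hxy)).1
  set c0 : Fin (2*k+5) := ⟨0, hn0⟩ with hc0
  set one : Fin (2*k+5) := ⟨1, hn1⟩ with hone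
  set two : Fin (2*k+5) := ⟨2, hn2⟩ with htwo
  have hout0 : ∀ y : Fin (2*k+5), Ar k c0 y ↔ (y = one ∨ y = two) := by
    intro y
    rw [Fin.ext_iff, Fin.ext_iff]
    show arc k 0 y.val ↔ (y.val = 1 ∨ y.val = 2)
    unfold arc; omega
  have huniq0 : ∀ c x y : Fin (2*k+5), x ≠ y → Ar k c x → Ar k c y →
      (∀ z, Ar k c z → z = x ∨ z = y) → c = c0 := by
    intro c x y hxy hx hy hall
    have hxyv : x.val ≠ y.val := fun h => hxy (Fin.ext h)
    by_cases hc : c.val = 0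
    · exact Fin.ext hc
    · exfalso
      have hc3 : c.val = 3 ∨ (k+5 ≤ c.val ∧ c.val ≤ 2*k+4) := by
        unfold Ar arc at hx; omega
      rcases hc3 with hc3 | hcs
      · have h4 : Ar k c ⟨4, by omega⟩ := by show arc k c.val 4; unfold arc; omega
        have h5 : Ar k c ⟨5, by omega⟩ := by show arc k c.val 5; unfold arc; omega
        have h6 : Ar k c ⟨6, by omega⟩ := by show arc k c.val 6; unfold arc; omega
        have e4 : (4:ℕ) = x.val ∨ (4:ℕ) = y.val :=
          (hall _ h4).imp (fun h => congrArg Fin.val h) (fun h => congrArg Fin.val h)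
        have e5 : (5:ℕ) = x.val ∨ (5:ℕ) = y.val :=
          (hall _ h5).imp (fun h => congrArg Fin.val h) (fun h => congrArg Fin.val h)
        have e6 : (6:ℕ) = x.val ∨ (6:ℕ) = y.val :=
          (hall _ h6).imp (fun h => congrArg Fin.val h) (fun h => congrArg Fin.val h)
        omega
      · have hx4 : x.val = k+4 := by unfold Ar arc at hx; omega
        have hy4 : y.val = k+4 := by unfold Ar arc at hy; omega
        omega
  -- choose winner and loser among the two cherry leaves
  have hne12 : ε one ≠ ε two := fun h => by
    have := hε h
    rw [Fin.ext_iff] at this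
    exact absurd this (by show ¬ ((1:ℕ) = 2); omega)
  obtain ⟨wi, li, hwl, hwin⟩ : ∃ wi li : Fin (2*k+5), WL wi.val li.val ∧ B (ε wi) (ε li) := by
    rcases Classical.em (B (ε one) (ε two)) with h | h
    · exact ⟨one, two, Or.inl ⟨rfl, rfl⟩, h⟩
    · refine ⟨two, one, Or.inr ⟨rfl, rfl⟩, ?_⟩
      by_contra h2
      exact h ((hB.2 _ _ hne12).mpr h2)
  have hwl' : wi ≠ li := by
    intro h
    rw [Fin.ext_iff] at h
    unfold WL at hwl
    omega
  have hout0' : ∀ y : Fin (2*k+5), Ar k c0 y ↔ (y = wi ∨ y = li) := by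
    intro y
    rw [Fin.ext_iff, Fin.ext_iff]
    show arc k 0 y.val ↔ (y.val = wi.val ∨ y.val = li.val)
    unfold WL at hwl
    unfold arc; omega
  -- first application of conv_patt
  set Q1 : Fin (2*k+5) → Fin (2*k+5) → Prop :=
    fun x y => q1 k wi.val li.val x.val y.val with hQ1
  have hQ1val : ∀ x y : Fin (2*k+5),
      ((Ar k x y ∧ x ≠ c0) ∨ ((x = c0 ∨ x = wi) ∧ y = li)) ↔ Q1 x y := by
    intro x y
    constructor
    · rintro (⟨h1, h2⟩ | ⟨h1, h2⟩)
      · exact Or.inl ⟨h1, fun h0 => h2 (Fin.ext h0)⟩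
      · refine Or.inr ⟨?_, congrArg Fin.val h2⟩
        rcases h1 with rfl | rfl
        · exact Or.inl rfl
        · exact Or.inr rfl
    · rintro (⟨h1, h2⟩ | ⟨h1, h2⟩)
      · exact Or.inl ⟨h1, fun h0 => h2 (congrArg Fin.val h0)⟩
      · refine Or.inr ⟨?_, Fin.ext h2⟩
        rcases h1 with h | h
        · exact Or.inl (Fin.ext h)
        · exact Or.inr (Fin.ext h)
  have hconv1 : conv B R = patt ε Q1 := by
    rw [hR, conv_patt hB hε hwl' hout0' huniq0 hwin]
    exact patt_congr ε hQ1val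
  have hsubQ1 : ∀ x y : Fin (2*k+5), Q1 x y → B (ε x) (ε y) := by
    intro x y hxy
    have h' : q1 k wi.val li.val x.val y.val := hxy
    rcases h' with ⟨ha, _⟩ | ⟨hx0, hyl⟩
    · exact hsubQ x y ha
    · have hyli : y = li := Fin.ext hyl
      have hAl : Ar k c0 li := by
        show arc k 0 li.val
        unfold WL at hwl; unfold arc; omega
      rcases hx0 with hx0 | hx0
      · have hxc : x = c0 := Fin.ext hx0
        rw [hxc, hyli]; exact hsubQ _ _ hAl
      · have hxw : x = wi := Fin.ext hx0
        rw [hxw, hyli]; exact hwin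
  -- the permutation σ
  set σ : Fin (2*k+5) ≃ Fin (2*k+5) :=
    { toFun := fun a => ⟨sfun k wi.val li.val a.val, sfun_lt hk hwl a.isLt⟩
      invFun := fun a => ⟨sinv k wi.val li.val a.val, sinv_lt hk hwl a.isLt⟩
      left_inv := fun a => Fin.ext (sinv_sfun hk hwl a.isLt)
      right_inv := fun a => Fin.ext (sfun_sinv hk hwl a.isLt) } with hσ
  have hcopy' : CopyA' k B S (conv B R) := by
    constructor
    · intro a b hab
      rw [hconv1] at hab
      obtain ⟨x, y, hq, rfl, rfl⟩ := hab
      exact ⟨hsubQ1 x y hq, hmem x, hmem y⟩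
    · refine ⟨σ.trans e, fun x y => ?_⟩
      rw [hconv1]
      have h1 : Ar k y x ↔ Q1 (σ x) (σ y) := arith1 hk hwl x.isLt y.isLt
      exact h1.trans (patt_apply hε (σ x) (σ y)).symm
  -- second application: the inverse computation
  have houtl : ∀ y : Fin (2*k+5), flp Q1 li y ↔ (y = wi ∨ y = c0) := by
    intro y
    constructor
    · intro h
      have h' : q1 k wi.val li.val y.val li.val := h
      have hv : y.val = wi.val ∨ y.val = 0 := by
        unfold WL at hwl; unfold q1 arc at h'; omega
      rcases hv with hv | hv
      · exact Or.inl (Fin.ext hv)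
      · exact Or.inr (Fin.ext hv)
    · intro h
      show q1 k wi.val li.val y.val li.val
      rcases h with rfl | rfl
      · unfold WL at hwl; unfold q1 arc; omega
      · show q1 k wi.val li.val 0 li.val
        unfold q1; right; exact ⟨Or.inl rfl, rfl⟩
  have huniql : ∀ c x y : Fin (2*k+5), x ≠ y → flp Q1 c x → flp Q1 c y →
      (∀ z, flp Q1 c z → z = x ∨ z = y) → c = li := by
    intro c x y hxy hx hy hall
    have hxyv : x.val ≠ y.val := fun h => hxy (Fin.ext h)
    have hx' : q1 k wi.val li.val x.val c.val := hx
    have hy' : q1 k wi.val li.val y.val c.val := hy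
    by_cases hc : c.val = li.val
    · exact Fin.ext hc
    · exfalso
      have hck4 : c.val = k+4 := by
        unfold WL at hwl; unfold q1 arc at hx' hy'; omega
      have hz1 : flp Q1 c ⟨k+5, by omega⟩ := by
        show q1 k wi.val li.val (k+5) c.val
        unfold WL at hwl; unfold q1 arc; omega
      have hz2 : flp Q1 c ⟨k+6, by omega⟩ := by
        show q1 k wi.val li.val (k+6) c.val
        unfold WL at hwl; unfold q1 arc; omega
      have hz3 : flp Q1 c ⟨k+7, by omega⟩ := by
        show q1 k wi.val li.val (k+7) c.val
        unfold WL at hwl; unfold q1 arc; omega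
      have e1 : (k+5 : ℕ) = x.val ∨ (k+5 : ℕ) = y.val :=
        (hall _ hz1).imp (fun h => congrArg Fin.val h) (fun h => congrArg Fin.val h)
      have e2 : (k+6 : ℕ) = x.val ∨ (k+6 : ℕ) = y.val :=
        (hall _ hz2).imp (fun h => congrArg Fin.val h) (fun h => congrArg Fin.val h)
      have e3 : (k+7 : ℕ) = x.val ∨ (k+7 : ℕ) = y.val :=
        (hall _ hz3).imp (fun h => congrArg Fin.val h) (fun h => congrArg Fin.val h)
      omega
  have hwil : wi ≠ li ∧ wi ≠ c0 := by
    constructor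
    · exact hwl'
    · intro h
      have h' : wi.val = (0:ℕ) := congrArg Fin.val h
      unfold WL at hwl
      omega
  have hwin2 : flp B (ε wi) (ε c0) := by
    show B (ε c0) (ε wi)
    apply hsubQ
    show arc k 0 wi.val
    unfold WL at hwl; unfold arc; omega
  have hconv2 : conv (flp B) (patt ε (flp Q1)) = patt ε
      (fun x y => (flp Q1 x y ∧ x ≠ li) ∨ ((x = li ∨ x = wi) ∧ y = c0)) :=
    conv_patt (flp_tournament hB) hε hwil.2 houtl huniql hwin2
  have hfinal : conv' B (conv B R) = R := by
    show flp (conv (flp B) (flp (conv B R))) = R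
    rw [hconv1, flp_patt, hconv2, flp_patt, hR]
    apply patt_congr
    intro a b
    have harith := arith2 (w := wi.val) (l := li.val) hk hwl (a.isLt) (b.isLt)
    show ((flp Q1 b a ∧ b ≠ li) ∨ ((b = li ∨ b = wi) ∧ a = c0)) ↔ Ar k a b
    constructor
    · rintro (⟨h1, h2⟩ | ⟨h1, h2⟩)
      · exact harith.mp (Or.inl ⟨h1, fun hv => h2 (Fin.ext hv)⟩)
      · refine harith.mp (Or.inr ⟨?_, congrArg Fin.val h2⟩)
        rcases h1 with rfl | rfl
        · exact Or.inl rfl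
        · exact Or.inr rfl
    · intro h
      rcases harith.mpr h with ⟨h1, h2⟩ | ⟨h1, h2⟩
      · exact Or.inl ⟨h1, fun hv => h2 (congrArg Fin.val hv)⟩
      · refine Or.inr ⟨?_, Fin.ext h2⟩
        rcases h1 with hv | hv
        · exact Or.inl (Fin.ext hv)
        · exact Or.inr (Fin.ext hv)
  exact ⟨hcopy', hfinal⟩

lemma dual (hk : 3 ≤ k) {B : W → W → Prop} (hB : IsTournament B) {S : Set W}
    {R' : W → W → Prop} (h : CopyA' k B S R') :
    CopyA k B S (conv' B R') ∧ conv B (conv' B R') = R' := by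
  have h1 : CopyA k (flp B) S (flp R') := by
    obtain ⟨hsub, e, he⟩ := h
    refine ⟨fun a b hab => ?_, e, fun x y => he y x⟩
    obtain ⟨hb, ha1, hb1⟩ := hsub b a hab
    exact ⟨hb, hb1, ha1⟩
  obtain ⟨hcopy, hinv⟩ := full hk (flp_tournament hB) h1
  set X := conv (flp B) (flp R') with hX
  constructor
  · obtain ⟨hsub, e, he⟩ := hcopy
    refine ⟨fun a b hab => ?_, e, fun x y => he y x⟩
    obtain ⟨hb, ha1, hb1⟩ := hsub b a hab
    exact ⟨hb, hb1, ha1⟩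
  · -- hinv : conv' (flp B) X = flp R'
    have h2 : flp (conv (flp (flp B)) (flp X)) = flp R' := hinv
    rw [flp_flp] at h2
    have h3 : conv B (flp X) = R' := by
      have := congrArg flp h2
      rwa [flp_flp, flp_flp] at this
    exact h3

lemma converse_invariant (hk : 3 ≤ k) : ConverseInvariant (Ar k) := by
  intro W _ B hB
  unfold copyCount
  apply Nat.card_congr
  refine
    { toFun := fun p => ⟨(p.1.1, conv B p.1.2), ?_⟩
      invFun := fun p => ⟨(p.1.1, conv' B p.1.2), ?_⟩
      left_inv := ?_
      right_inv := ?_ }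
  · exact (full hk hB (⟨p.2.1, p.2.2⟩ : CopyA k B p.1.1 p.1.2)).1
  · exact (dual hk hB (⟨p.2.1, p.2.2⟩ : CopyA' k B p.1.1 p.1.2)).1
  · intro p
    obtain ⟨⟨S, R⟩, hp⟩ := p
    apply Subtype.ext
    show (S, conv' B (conv B R)) = (S, R)
    rw [(full hk hB (hp : CopyA k B S R)).2]
  · intro p
    obtain ⟨⟨S, R⟩, hp⟩ := p
    apply Subtype.ext
    show (S, conv B (conv' B R)) = (S, R)
    rw [(dual hk hB (hp : CopyA' k B S R)).2]

end S15

/-- For every `k ≥ 3` there is a converse invariant orgraph with maximum degree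
`k` that is not isomorphic to its converse. -/
theorem stmt_15 (k : ℕ) (hk : 3 ≤ k) :
    ∃ (n : ℕ) (A : Fin n → Fin n → Prop),
      IsOrgraph A ∧
      (Finset.univ.sup fun v => outDeg A v + inDeg A v) = k ∧
      (¬ ∃ e : Fin n ≃ Fin n, ∀ a b, A a b ↔ A (e b) (e a)) ∧
      ConverseInvariant A :=
  ⟨2*k+5, S15.Ar k, S15.orgraph k, S15.sup_deg hk, S15.not_self_converse k hk,
    S15.converse_invariant hk⟩
end

section
/- Let D be an orientation of the star K_{1,d} with d ≥ 3. Then D is converse invariant if and only if D ≅ −D, i.e., if and only if the central vertex has equal out-degree and in-degree (in particular d must be even). -/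
open Finset Polynomial

section AuxStar

lemma copyCount_iso {V W : Type*} (A A' : V → V → Prop) (B : W → W → Prop)
    (e : V ≃ V) (h : ∀ a b, A a b ↔ A' (e a) (e b)) : copyCount A B = copyCount A' B := by
  unfold copyCount
  apply Nat.card_congr
  apply Equiv.subtypeEquivRight
  intro p
  refine and_congr_right fun _ => ⟨fun ⟨f, hf⟩ => ⟨e.symm.trans f, fun a b => ?_⟩,
    fun ⟨f, hf⟩ => ⟨e.trans f, fun a b => ?_⟩⟩
  · have := h (e.symm a) (e.symm b)
    simp only [Equiv.apply_symm_apply] at this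
    simpa [Equiv.trans_apply] using this.symm.trans (hf (e.symm a) (e.symm b))
  · simpa [Equiv.trans_apply] using (h a b).trans (hf (e a) (e b))

lemma deg_split {V : Type*} [Fintype V] (A : V → V → Prop) (c : V)
    (hasym : ∀ u v, A u v → ¬ A v u) (htot : ∀ v, v ≠ c → A c v ∨ A v c) :
    outDeg A c + inDeg A c = Fintype.card V - 1 := by
  classical
  unfold outDeg inDeg
  rw [Nat.card_eq_fintype_card, Nat.card_eq_fintype_card, Fintype.card_subtype,
    Fintype.card_subtype]
  have hdis : Disjoint (univ.filter (fun v => A c v)) (univ.filter (fun v => A v c)) := by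
    rw [Finset.disjoint_left]
    intro v hv hv'
    exact hasym _ _ (mem_filter.mp hv).2 (mem_filter.mp hv').2
  rw [← Finset.card_union_of_disjoint hdis, ← Finset.filter_or]
  have : (univ.filter fun v => A c v ∨ A v c) = univ.filter (fun v => v ≠ c) := by
    apply Finset.filter_congr
    intro v _
    constructor
    · rintro (h | h) rfl <;> exact hasym _ _ h h
    · exact htot v
  rw [this, Finset.filter_ne', Finset.card_erase_of_mem (mem_univ c), Finset.card_univ]

lemma starEquiv {V W : Type*} (c : V) (u : W) (A : V → V → Prop) (B : W → W → Prop)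
    (hA1 : ∀ a b, A a b → ¬ A b a) (hA2 : ∀ a b, A a b → a = c ∨ b = c)
    (hA3 : ∀ v, v ≠ c → A c v ∨ A v c)
    (hB1 : ∀ a b, B a b → ¬ B b a) (hB2 : ∀ a b, B a b → a = u ∨ b = u)
    (hB3 : ∀ w, w ≠ u → B u w ∨ B w u)
    (e₁ : {v // A c v} ≃ {w // B u w}) (e₂ : {v // A v c} ≃ {w // B w u}) :
    ∃ f : V ≃ W, ∀ a b, A a b ↔ B (f a) (f b) := by
  classical
  have hAcc : ¬ A c c := fun h => hA1 _ _ h h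
  have hBuu : ¬ B u u := fun h => hB1 _ _ h h
  set f : V → W := fun v =>
    if h : A c v then (e₁ ⟨v, h⟩ : W) else if h : A v c then (e₂ ⟨v, h⟩ : W) else u with hf
  set g : W → V := fun w =>
    if h : B u w then (e₁.symm ⟨w, h⟩ : V) else if h : B w u then (e₂.symm ⟨w, h⟩ : V) else c
    with hg
  have hf1 : ∀ v (h : A c v), f v = (e₁ ⟨v, h⟩ : W) := fun v h => dif_pos h
  have hf2 : ∀ v (h : A v c), f v = (e₂ ⟨v, h⟩ : W) := by
    intro v h
    rw [hf]
    simp only [dif_neg (hA1 _ _ h), dif_pos h]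
  have hfc : f c = u := by rw [hf]; simp only [dif_neg hAcc]
  have hg1 : ∀ w (h : B u w), g w = (e₁.symm ⟨w, h⟩ : V) := fun w h => dif_pos h
  have hg2 : ∀ w (h : B w u), g w = (e₂.symm ⟨w, h⟩ : V) := by
    intro w h
    rw [hg]
    simp only [dif_neg (hB1 _ _ h), dif_pos h]
  have hgu : g u = c := by rw [hg]; simp only [dif_neg hBuu]
  have hgf : Function.LeftInverse g f := by
    intro v
    by_cases h1 : A c v
    · rw [hf1 v h1, hg1 _ (e₁ ⟨v, h1⟩).2]
      have : (⟨((e₁ ⟨v, h1⟩ : {w // B u w}) : W), (e₁ ⟨v, h1⟩).2⟩ : {w // B u w}) = e₁ ⟨v, h1⟩ :=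
        Subtype.ext rfl
      rw [this, Equiv.symm_apply_apply]
    · by_cases h2 : A v c
      · rw [hf2 v h2, hg2 _ (e₂ ⟨v, h2⟩).2]
        have : (⟨((e₂ ⟨v, h2⟩ : {w // B w u}) : W), (e₂ ⟨v, h2⟩).2⟩ : {w // B w u}) = e₂ ⟨v, h2⟩ :=
          Subtype.ext rfl
        rw [this, Equiv.symm_apply_apply]
      · have hv : v = c := by
          by_contra hv
          rcases hA3 v hv with h | h
          exacts [h1 h, h2 h]
        rw [hv, hfc, hgu]
  have hfg : Function.RightInverse g f := by
    intro w
    by_cases h1 : B u w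
    · rw [hg1 w h1, hf1 _ (e₁.symm ⟨w, h1⟩).2]
      have : (⟨((e₁.symm ⟨w, h1⟩ : {v // A c v}) : V), (e₁.symm ⟨w, h1⟩).2⟩ : {v // A c v}) =
          e₁.symm ⟨w, h1⟩ := Subtype.ext rfl
      rw [this, Equiv.apply_symm_apply]
    · by_cases h2 : B w u
      · rw [hg2 w h2, hf2 _ (e₂.symm ⟨w, h2⟩).2]
        have : (⟨((e₂.symm ⟨w, h2⟩ : {v // A v c}) : V), (e₂.symm ⟨w, h2⟩).2⟩ : {v // A v c}) =
            e₂.symm ⟨w, h2⟩ := Subtype.ext rfl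
        rw [this, Equiv.apply_symm_apply]
      · have hw : w = u := by
          by_contra hw
          rcases hB3 w hw with h | h
          exacts [h1 h, h2 h]
        rw [hw, hgu, hfc]
  refine ⟨⟨f, g, hgf, hfg⟩, ?_⟩
  have fout : ∀ v (h : A c v), B u (f v) := by intro v h; rw [hf1 v h]; exact (e₁ ⟨v, h⟩).2
  have fin : ∀ v (h : A v c), B (f v) u := by intro v h; rw [hf2 v h]; exact (e₂ ⟨v, h⟩).2
  intro a b
  show A a b ↔ B (f a) (f b)
  by_cases hac : a = c
  · by_cases hbc : b = c
    · rw [hac, hbc, hfc]; simp [hAcc, hBuu]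
    · rcases hA3 b hbc with h | h
      · rw [hac, hfc]
        exact ⟨fun _ => fout b h, fun _ => h⟩
      · rw [hac, hfc]
        exact ⟨fun h' => absurd h' (hA1 _ _ h), fun h' => absurd h' (hB1 _ _ (fin b h))⟩
  · rcases hA3 a hac with hao | hai
    · -- a is an out-neighbor
      have hBa : B u (f a) := fout a hao
      constructor
      · intro h'
        exfalso
        rcases hA2 _ _ h' with he | he
        · exact hac he
        · rw [he] at h'
          exact hA1 _ _ h' hao
      · intro h'
        exfalso
        rcases hB2 _ _ h' with he | he
        · rw [he] at hBa; exact hBuu hBa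
        · rcases eq_or_ne b c with hbc | hbc
          · rw [hbc, hfc] at h'; exact hB1 _ _ h' hBa
          · rcases hA3 b hbc with h | h
            · have := fout b h; rw [he] at this; exact hBuu this
            · have := fin b h; rw [he] at this; exact hBuu this
    · -- a is an in-neighbor : A a c
      have hBa : B (f a) u := fin a hai
      by_cases hbc : b = c
      · rw [hbc, hfc]
        exact ⟨fun _ => hBa, fun _ => hai⟩
      · constructor
        · intro h'
          exfalso
          rcases hA2 _ _ h' with he | he
          · exact hac he
          · exact hbc he
        · intro h'
          exfalso
          rcases hB2 _ _ h' with he | he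
          · rw [he] at hBa; exact hBuu hBa
          · rcases hA3 b hbc with h | h
            · have := fout b h; rw [he] at this; exact hBuu this
            · have := fin b h; rw [he] at this; exact hBuu this

lemma copyCount_star {V W : Type*} [Fintype V] [Fintype W] (d : ℕ) (hd : 3 ≤ d)
    (hcardV : Fintype.card V = d + 1) (hcardW : Fintype.card W = d + 1)
    (c : V) (A : V → V → Prop)
    (hasym : ∀ u v, A u v → ¬ A v u)
    (hstar : ∀ u v, (A u v ∨ A v u) ↔ ((u = c ∧ v ≠ c) ∨ (v = c ∧ u ≠ c)))
    (B : W → W → Prop) (hT : IsTournament B) :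
    copyCount A B = Nat.card {u : W // outDeg B u = outDeg A c} := by
  classical
  -- star facts
  have hA2 : ∀ a b, A a b → a = c ∨ b = c := by
    intro a b h
    have := (hstar a b).mp (Or.inl h)
    tauto
  have hA3 : ∀ v, v ≠ c → A c v ∨ A v c := fun v hv => (hstar c v).mpr (Or.inl ⟨rfl, hv⟩)
  -- tournament facts
  have hBasym : ∀ a b, B a b → ¬ B b a := by
    intro a b h h'
    rcases eq_or_ne a b with rfl | hne
    · exact hT.1 a h
    · exact (hT.2 a b hne).mp h h'
  have hB3 : ∀ u w, w ≠ u → B u w ∨ B w u := by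
    intro u w hw
    by_cases h : B u w
    · exact Or.inl h
    · exact Or.inr (not_not.mp ((not_iff_not.mpr (hT.2 u w hw.symm)).mp h))
  set p := outDeg A c with hp
  set q := inDeg A c with hq
  have hpq : p + q = d := by
    have := deg_split A c hasym hA3
    rw [hcardV] at this
    omega
  have hdegB : ∀ u : W, outDeg B u + inDeg B u = d := by
    intro u
    have := deg_split B u hBasym (fun v hv => hB3 u v hv)
    rw [hcardW] at this
    omega
  set R : W → (W → W → Prop) := fun u a b => B a b ∧ (a = u ∨ b = u) with hR
  -- the inverse function
  have hcond1 : ∀ u : W, ∀ a b, R u a b → B a b ∧ a ∈ (Set.univ : Set W) ∧ b ∈ (Set.univ : Set W) :=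
    fun u a b h => ⟨h.1, trivial, trivial⟩
  have hcond2 : ∀ u : W, outDeg B u = p →
      ∃ e : V ≃ (Set.univ : Set W), ∀ a b, A a b ↔ R u (e a : W) (e b : W) := by
    intro u hu
    have hinu : inDeg B u = q := by have := hdegB u; omega
    have hRout : ∀ w, R u u w ↔ B u w := fun w => ⟨fun h => h.1, fun h => ⟨h, Or.inl rfl⟩⟩
    have hRin : ∀ w, R u w u ↔ B w u := fun w => ⟨fun h => h.1, fun h => ⟨h, Or.inr rfl⟩⟩
    have e₁ : {v // A c v} ≃ {w // R u u w} := by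
      refine (Fintype.equivOfCardEq ?_).trans (Equiv.subtypeEquivRight fun w => (hRout w).symm)
      rw [← Nat.card_eq_fintype_card, ← Nat.card_eq_fintype_card]
      exact (hp.symm.trans hu.symm : Nat.card {v // A c v} = Nat.card {w // B u w})
    have e₂ : {v // A v c} ≃ {w // R u w u} := by
      refine (Fintype.equivOfCardEq ?_).trans (Equiv.subtypeEquivRight fun w => (hRin w).symm)
      rw [← Nat.card_eq_fintype_card, ← Nat.card_eq_fintype_card]
      exact (hq.symm.trans hinu.symm : Nat.card {v // A v c} = Nat.card {w // B w u})
    obtain ⟨f, hf⟩ := starEquiv c u A (R u) hasym hA2 hA3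
      (fun a b h h' => hBasym a b h.1 h'.1)
      (fun a b h => h.2)
      (fun w hw => by
        rcases hB3 u w hw with h | h
        · exact Or.inl ⟨h, Or.inl rfl⟩
        · exact Or.inr ⟨h, Or.inr rfl⟩)
      e₁ e₂
    exact ⟨f.trans (Equiv.Set.univ W).symm, fun a b => hf a b⟩
  set inv : {u : W // outDeg B u = p} → {pr : Set W × (W → W → Prop) //
      (∀ a b, pr.2 a b → B a b ∧ a ∈ pr.1 ∧ b ∈ pr.1) ∧
      ∃ e : V ≃ pr.1, ∀ a b, A a b ↔ pr.2 (e a : W) (e b : W)} :=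
    fun x => ⟨(Set.univ, R x.1), hcond1 x.1, hcond2 x.1 x.2⟩ with hinv
  have hbij : Function.Bijective inv := by
    constructor
    · rintro ⟨u, hu⟩ ⟨u', hu'⟩ h
      have h2 : R u = R u' := congrArg (fun t => t.1.2) h
      rcases eq_or_ne u u' with rfl | hne
      · rfl
      exfalso
      have : ∃ v : W, v ≠ u ∧ v ≠ u' := by
        by_contra hc
        push_neg at hc
        have hsub : (Finset.univ : Finset W) ⊆ {u, u'} := by
          intro v _
          by_cases hvu : v = u
          · simp [hvu]
          · simp [hc v hvu]
        have := Finset.card_le_card hsub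
        have h2 := Finset.card_insert_le u ({u'} : Finset W)
        simp [Finset.card_univ, hcardW, Finset.card_singleton] at this h2
        omega
      obtain ⟨v, hvu, hvu'⟩ := this
      rcases hB3 u v hvu with h | h
      · have : R u u v := ⟨h, Or.inl rfl⟩
        rw [h2] at this
        rcases this.2 with he | he
        · exact hne he
        · exact hvu' he
      · have : R u v u := ⟨h, Or.inr rfl⟩
        rw [h2] at this
        rcases this.2 with he | he
        · exact hvu' he
        · exact hne he
    · rintro ⟨⟨S, R0⟩, hcond, ⟨e, he⟩⟩
      -- S is everything
      have hScard : Fintype.card ↥S = d + 1 := by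
        rw [← Nat.card_eq_fintype_card, Nat.card_congr e.symm, Nat.card_eq_fintype_card, hcardV]
      have hS : S = Set.univ := by
        have h2 : S.toFinset = Finset.univ :=
          Finset.eq_univ_of_card _ (by rw [Set.toFinset_card, hScard, hcardW])
        rw [← Set.coe_toFinset S, h2, Finset.coe_univ]
      subst hS
      set f : V ≃ W := e.trans (Equiv.Set.univ W) with hfdef
      have hiff : ∀ a b, A a b ↔ R0 (f a) (f b) := fun a b => he a b
      set u := f c with hu
      have hRarc : ∀ x y, R0 x y → B x y ∧ (x = u ∨ y = u) := by
        intro x y h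
        refine ⟨(hcond x y h).1, ?_⟩
        have := (hiff (f.symm x) (f.symm y)).mpr (by simpa using h)
        rcases hA2 _ _ this with he' | he'
        · left; rw [hu, ← he']; simp
        · right; rw [hu, ← he']; simp
      have hfu : ∀ y, B u y → R0 u y := by
        intro y hy
        have hyu : y ≠ u := fun hyy => hT.1 u (hyy ▸ hy)
        set b' := f.symm y with hb'
        have hyb : y = f b' := by simp [hb']
        have hbc : b' ≠ c := by
          intro hbc
          rw [hbc] at hyb
          exact hyu (hyb.trans hu.symm)
        rcases hA3 b' hbc with h | h
        · have := (hiff c b').mp h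
          rwa [← hu, ← hyb] at this
        · exfalso
          have := (hiff b' c).mp h
          rw [← hu, ← hyb] at this
          exact hBasym _ _ hy (hcond _ _ this).1
      have hfu' : ∀ y, B y u → R0 y u := by
        intro y hy
        have hyu : y ≠ u := fun hyy => hT.1 u (hyy ▸ hy)
        set b' := f.symm y with hb'
        have hyb : y = f b' := by simp [hb']
        have hbc : b' ≠ c := by
          intro hbc
          rw [hbc] at hyb
          exact hyu (hyb.trans hu.symm)
        rcases hA3 b' hbc with h | h
        · exfalso
          have := (hiff c b').mp h
          rw [← hu, ← hyb] at this
          exact hBasym _ _ hy (hcond _ _ this).1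
        · have := (hiff b' c).mp h
          rwa [← hu, ← hyb] at this
      have hup : outDeg B u = p := by
        rw [hp]
        unfold outDeg
        apply Nat.card_congr
        apply Equiv.symm
        refine Equiv.trans (Equiv.subtypeEquiv f fun v => hiff c v) ?_
        exact Equiv.subtypeEquivRight fun y =>
          ⟨fun h => (hcond _ _ h).1, fun h => hfu y h⟩
      refine ⟨⟨u, hup⟩, ?_⟩
      apply Subtype.ext
      show (Set.univ, R u) = (Set.univ, R0)
      have hR0 : R u = R0 := by
        funext x y
        apply propext
        constructor
        · rintro ⟨hB, rfl | rfl⟩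
          · exact hfu _ hB
          · exact hfu' _ hB
        · intro h
          exact ⟨(hRarc x y h).1, (hRarc x y h).2⟩
      rw [hR0]
  rw [copyCount, Nat.card_congr (Equiv.ofBijective inv hbij).symm]

def flipT (n a b : ℕ) : Fin n → Fin n → Prop := fun i j =>
  ((j : ℕ) < (i : ℕ) ∧ ¬((i : ℕ) = a ∧ (j : ℕ) = b)) ∨ ((i : ℕ) = b ∧ (j : ℕ) = a)

lemma flipT_tournament (n a b : ℕ) (h : b + 2 = a) : IsTournament (flipT n a b) := by
  constructor
  · intro i
    simp only [flipT]
    omega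
  · intro i j hne
    have hij : (i : ℕ) ≠ (j : ℕ) := fun hh => hne (Fin.ext hh)
    simp only [flipT]
    omega

lemma card_fin_filter (n : ℕ) (Q : ℕ → Prop) [DecidablePred Q] :
    Nat.card {i : Fin n // Q i.val} = ((Finset.range n).filter Q).card := by
  classical
  rw [Nat.card_eq_fintype_card, Fintype.card_subtype]
  rw [← Finset.card_image_of_injective (univ.filter fun i : Fin n => Q i.val) Fin.val_injective]
  congr 1
  ext y
  simp only [Finset.mem_image, Finset.mem_filter, Finset.mem_range, Finset.mem_univ, true_and]
  constructor
  · rintro ⟨i, hQ, rfl⟩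
    exact ⟨i.isLt, hQ⟩
  · rintro ⟨hy, hQ⟩
    exact ⟨⟨y, hy⟩, hQ, rfl⟩

lemma flipT_score (n a b : ℕ) (hb : b + 2 = a) (han : a < n) (i : Fin n) :
    outDeg (flipT n a b) i =
      if (i : ℕ) = a then a - 1 else if (i : ℕ) = b then b + 1 else (i : ℕ) := by
  classical
  have key : outDeg (flipT n a b) i = ((Finset.range n).filter
      (fun y => (y < (i : ℕ) ∧ ¬((i : ℕ) = a ∧ y = b)) ∨ ((i : ℕ) = b ∧ y = a))).card := by
    unfold outDeg flipT
    exact card_fin_filter n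
      (fun y => (y < (i : ℕ) ∧ ¬((i : ℕ) = a ∧ y = b)) ∨ ((i : ℕ) = b ∧ y = a))
  rw [key]
  by_cases h1 : (i : ℕ) = a
  · rw [if_pos h1]
    have : (Finset.range n).filter
        (fun y => (y < (i : ℕ) ∧ ¬((i : ℕ) = a ∧ y = b)) ∨ ((i : ℕ) = b ∧ y = a)) =
        (Finset.range a).erase b := by
      ext y
      simp only [Finset.mem_filter, Finset.mem_range, Finset.mem_erase]
      omega
    rw [this, Finset.card_erase_of_mem (by simp; omega), Finset.card_range]
  · rw [if_neg h1]
    by_cases h2 : (i : ℕ) = b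
    · rw [if_pos h2]
      have : (Finset.range n).filter
          (fun y => (y < (i : ℕ) ∧ ¬((i : ℕ) = a ∧ y = b)) ∨ ((i : ℕ) = b ∧ y = a)) =
          insert a (Finset.range b) := by
        ext y
        simp only [Finset.mem_filter, Finset.mem_range, Finset.mem_insert]
        omega
      rw [this, Finset.card_insert_of_notMem (by simp; omega), Finset.card_range]
    · rw [if_neg h2]
      have : (Finset.range n).filter
          (fun y => (y < (i : ℕ) ∧ ¬((i : ℕ) = a ∧ y = b)) ∨ ((i : ℕ) = b ∧ y = a)) =
          Finset.range (i : ℕ) := by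
        ext y
        simp only [Finset.mem_filter, Finset.mem_range]
        have := i.isLt
        omega
      rw [this, Finset.card_range]

lemma flipT_count (n a b x : ℕ) (hb : b + 2 = a) (han : a < n) :
    Nat.card {i : Fin n // outDeg (flipT n a b) i = x} =
      if x = a - 1 then 3 else if x = a ∨ x = b then 0 else if x < n then 1 else 0 := by
  classical
  have step1 : Nat.card {i : Fin n // outDeg (flipT n a b) i = x} =
      Nat.card {i : Fin n // (if i.val = a then a - 1 else if i.val = b then b + 1 else i.val) = x} :=
    Nat.card_congr (Equiv.subtypeEquivRight fun i => by rw [flipT_score n a b hb han i])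
  rw [step1, card_fin_filter n (fun y => (if y = a then a - 1 else if y = b then b + 1 else y) = x)]
  split_ifs with h1 h2 h3
  · -- x = a - 1 : three elements
    have : (Finset.range n).filter (fun y => (if y = a then a - 1 else if y = b then b + 1 else y) = x) =
        {b, a - 1, a} := by
      ext y
      simp only [Finset.mem_filter, Finset.mem_range, Finset.mem_insert, Finset.mem_singleton]
      split_ifs <;> omega
    rw [this]
    rw [Finset.card_insert_of_notMem (by simp; omega),
      Finset.card_insert_of_notMem (by simp; omega), Finset.card_singleton]
  · have : (Finset.range n).filter (fun y => (if y = a then a - 1 else if y = b then b + 1 else y) = x) =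
        (∅ : Finset ℕ) := by
      ext y
      simp only [Finset.mem_filter, Finset.mem_range, Finset.notMem_empty, iff_false, not_and]
      intro hy
      split_ifs <;> omega
    rw [this, Finset.card_empty]
  · have : (Finset.range n).filter (fun y => (if y = a then a - 1 else if y = b then b + 1 else y) = x) =
        {x} := by
      ext y
      simp only [Finset.mem_filter, Finset.mem_range, Finset.mem_singleton]
      split_ifs <;> omega
    rw [this, Finset.card_singleton]
  · have : (Finset.range n).filter (fun y => (if y = a then a - 1 else if y = b then b + 1 else y) = x) =
        (∅ : Finset ℕ) := by
      ext y
      simp only [Finset.mem_filter, Finset.mem_range, Finset.notMem_empty, iff_false, not_and]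
      intro hy
      split_ifs <;> omega
    rw [this, Finset.card_empty]

lemma exists_bad (d p q : ℕ) (hd : 3 ≤ d) (hpq : p + q = d) (hne : p ≠ q) :
    ∃ B : Fin (d + 1) → Fin (d + 1) → Prop, IsTournament B ∧
      Nat.card {u : Fin (d + 1) // outDeg B u = p} ≠
        Nat.card {u : Fin (d + 1) // outDeg B u = q} := by
  set r := max p q with hr
  set s := min p q with hs
  have hrs : r + s = d := by omega
  have hsr : s < r := by omega
  have key : ∃ B : Fin (d + 1) → Fin (d + 1) → Prop, IsTournament B ∧
      Nat.card {u : Fin (d + 1) // outDeg B u = r} ≠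
        Nat.card {u : Fin (d + 1) // outDeg B u = s} := by
    rcases Nat.eq_zero_or_pos s with hs0 | hs1
    · -- s = 0, r = d ; flip the arc between vertices 2 and 0
      refine ⟨flipT (d + 1) 2 0, flipT_tournament _ _ _ rfl, ?_⟩
      rw [flipT_count (d + 1) 2 0 r rfl (by omega), flipT_count (d + 1) 2 0 s rfl (by omega)]
      split_ifs <;> omega
    · -- s ≥ 1 : flip the arc between vertices r+1 and r-1
      have hr2 : 2 ≤ r := by omega
      refine ⟨flipT (d + 1) (r + 1) (r - 1), flipT_tournament _ _ _ (by omega), ?_⟩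
      rw [flipT_count (d + 1) (r + 1) (r - 1) r (by omega) (by omega),
        flipT_count (d + 1) (r + 1) (r - 1) s (by omega) (by omega)]
      split_ifs <;> omega
  obtain ⟨B, hB, hcount⟩ := key
  rcases le_total p q with h | h
  · have h1 : r = q := by omega
    have h2 : s = p := by omega
    rw [h1, h2] at hcount
    exact ⟨B, hB, hcount.symm⟩
  · have h1 : r = p := by omega
    have h2 : s = q := by omega
    rw [h1, h2] at hcount
    exact ⟨B, hB, hcount⟩

end AuxStar

/-- An orientation of the star `K_{1,d}`, `d ≥ 3`, is converse invariant iff it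
is isomorphic to its converse, iff the central vertex has equal out- and
in-degree. -/
theorem stmt_16 {V : Type} [Fintype V] [DecidableEq V]
    (d : ℕ) (hd : 3 ≤ d) (hcard : Fintype.card V = d + 1)
    (c : V) (A : V → V → Prop)
    (hasym : ∀ u v, A u v → ¬ A v u)
    (hstar : ∀ u v, (A u v ∨ A v u) ↔ ((u = c ∧ v ≠ c) ∨ (v = c ∧ u ≠ c))) :
    (ConverseInvariant A ↔ ∃ e : V ≃ V, ∀ a b, A a b ↔ A (e b) (e a)) ∧
    ((∃ e : V ≃ V, ∀ a b, A a b ↔ A (e b) (e a)) ↔ outDeg A c = inDeg A c) := by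
  classical
  have hA2 : ∀ a b, A a b → a = c ∨ b = c := by
    intro a b h
    have := (hstar a b).mp (Or.inl h)
    tauto
  have hA3 : ∀ v, v ≠ c → A c v ∨ A v c := fun v hv => (hstar c v).mpr (Or.inl ⟨rfl, hv⟩)
  set p := outDeg A c with hp
  set q := inDeg A c with hq
  have hpq : p + q = d := by
    have := deg_split A c hasym hA3
    rw [hcard] at this
    omega
  have part2 : (∃ e : V ≃ V, ∀ a b, A a b ↔ A (e b) (e a)) ↔ p = q := by
    constructor
    · rintro ⟨e, he⟩
      have hec : e c = c := by
        by_contra hec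
        have hcard2 : 1 < (Finset.univ.erase c).card := by
          rw [Finset.card_erase_of_mem (mem_univ c), Finset.card_univ, hcard]
          omega
        obtain ⟨v, hv, w, hw, hvw⟩ := Finset.one_lt_card.mp hcard2
        have hvc : v ≠ c := (Finset.mem_erase.mp hv).1
        have hwc : w ≠ c := (Finset.mem_erase.mp hw).1
        have key : ∀ x, x ≠ c → e x = c := by
          intro x hx
          rcases hA3 x hx with h | h
          · rcases hA2 _ _ ((he c x).mp h) with h' | h'
            · exact h'
            · exact absurd h' hec
          · rcases hA2 _ _ ((he x c).mp h) with h' | h'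
            · exact absurd h' hec
            · exact h'
        exact hvw (e.injective ((key v hvc).trans (key w hwc).symm))
      have hiff : ∀ v, A c v ↔ A (e v) c := by
        intro v
        have := he c v
        rwa [hec] at this
      exact Nat.card_congr (Equiv.subtypeEquiv e fun v => hiff v)
    · intro hpq'
      set A' : V → V → Prop := fun a b => A b a with hA'
      have e₁ : {v // A c v} ≃ {w // A' c w} := by
        apply Fintype.equivOfCardEq
        rw [← Nat.card_eq_fintype_card, ← Nat.card_eq_fintype_card]
        exact hp.symm.trans (hpq'.trans hq)
      have e₂ : {v // A v c} ≃ {w // A' w c} := by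
        apply Fintype.equivOfCardEq
        rw [← Nat.card_eq_fintype_card, ← Nat.card_eq_fintype_card]
        exact hq.symm.trans (hpq'.symm.trans hp)
      obtain ⟨f, hf⟩ := starEquiv c c A A' hasym hA2 hA3
        (fun a b h h' => hasym _ _ h' h)
        (fun a b h => (hA2 b a h).symm)
        (fun w hw => (hA3 w hw).symm)
        e₁ e₂
      exact ⟨f, fun a b => hf a b⟩
  refine ⟨⟨?_, ?_⟩, part2⟩
  · intro hCI
    rw [part2]
    by_contra hne
    obtain ⟨B, hTB, hcount⟩ := exists_bad d p q hd hpq hne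
    have h1 := copyCount_star d hd hcard (Fintype.card_fin (d + 1)) c A hasym hstar B hTB
    have h2 := copyCount_star d hd hcard (Fintype.card_fin (d + 1)) c (fun a b => A b a)
      (fun u v h h' => hasym v u h h')
      (fun u v => by have := hstar v u; tauto) B hTB
    have h3 := hCI (Fin (d + 1)) inferInstance B hTB
    rw [h1, h2] at h3
    have h4 : outDeg (fun a b => A b a) c = q := rfl
    rw [h4] at h3
    exact hcount h3
  · rintro ⟨e, he⟩
    intro W instW B hTB
    exact copyCount_iso A (fun a b => A b a) B e (fun a b => he a b)
end
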